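/- Let f : ℝ → ℝ be continuous, strictly increasing with f(0) = 0, and let F(t) = ∫₀ᵗ f(s) ds. Suppose lim_{t→0⁺} t·f(t)/F(t) = ω with ω ∈ [1,2), and suppose h(t) = ∫₀ᵗ F(s)^(-1/2) ds is finite for all t ≥ 0. Then lim_{t→0⁺} t/(√(F(t)) · h(t)) = 1 - ω/2. -/

import Mathlib

open MeasureTheory Set Filter

/-- L'Hôpital-type limit: with `F t = ∫₀ᵗ f`, `h t = ∫₀ᵗ F(s)^{-1/2} ds` finite, and
`t f(t)/F(t) → ω ∈ [1,2)` as `t → 0⁺`, one has `t/(√(F t) · h t) → 1 - ω/2`. -/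
theorem stmt1 (f F h : ℝ → ℝ) (hf_cont : Continuous f) (hf_mono : StrictMono f)
    (hf0 : f 0 = 0)
    (hF : ∀ t, F t = ∫ s in (0:ℝ)..t, f s)
    (hfin : ∀ t ≥ (0:ℝ), IntegrableOn (fun s => (F s) ^ (-(1:ℝ)/2)) (Set.Ioc 0 t) volume)
    (hh : ∀ t, h t = ∫ s in (0:ℝ)..t, (F s) ^ (-(1:ℝ)/2))
    (ω : ℝ) (hω : ω ∈ Set.Ico (1:ℝ) 2)
    (hlim : Tendsto (fun t => t * f t / F t) (nhdsWithin 0 (Set.Ioi 0)) (nhds ω)) :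
    Tendsto (fun t => t / (Real.sqrt (F t) * h t)) (nhdsWithin 0 (Set.Ioi 0))
      (nhds (1 - ω/2)) := by
  have hFeq : F = fun t => ∫ s in (0:ℝ)..t, f s := funext hF
  have hheq : h = fun t => ∫ s in (0:ℝ)..t, (F s) ^ (-(1:ℝ)/2) := funext hh
  -- basic positivity facts
  have hf_nonneg : ∀ x ≥ (0:ℝ), 0 ≤ f x := by
    intro x hx
    rcases eq_or_lt_of_le hx with rfl | hx
    · exact hf0.ge
    · exact (hf0 ▸ (hf_mono hx)).le
  have hf_pos : ∀ x > (0:ℝ), 0 < f x := fun x hx => hf0 ▸ hf_mono hx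
  have hF_deriv : ∀ x : ℝ, HasDerivAt F (f x) x := by
    intro x
    rw [hFeq]
    exact intervalIntegral.integral_hasDerivAt_right (hf_cont.intervalIntegrable 0 x)
      (hf_cont.stronglyMeasurable.stronglyMeasurableAtFilter) hf_cont.continuousAt
  have hF_cont : Continuous F := by
    have : Differentiable ℝ F := fun x => (hF_deriv x).differentiableAt
    exact this.continuous
  have hF_pos : ∀ x > (0:ℝ), 0 < F x := by
    intro x hx
    rw [hF]
    apply intervalIntegral.intervalIntegral_pos_of_pos_on (hf_cont.intervalIntegrable 0 x)
      (fun u hu => hf_pos u hu.1) hx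
  have hF_mono : ∀ s t : ℝ, 0 ≤ s → s ≤ t → F s ≤ F t := by
    intro s t hs hst
    have h1 : F t - F s = ∫ u in s..t, f u := by
      rw [hF, hF, ← intervalIntegral.integral_interval_sub_left
        (hf_cont.intervalIntegrable 0 t) (hf_cont.intervalIntegrable 0 s)]
    have h2 : 0 ≤ ∫ u in s..t, f u :=
      intervalIntegral.integral_nonneg hst (fun u hu => hf_nonneg u (hs.trans hu.1))
    linarith [h1 ▸ h2]
  -- rpow to sqrt conversion
  have hrpow : ∀ x > (0:ℝ), (F x) ^ (-(1:ℝ)/2) = (Real.sqrt (F x))⁻¹ := by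
    intro x hx
    rw [Real.sqrt_eq_rpow, ← Real.rpow_neg (hF_pos x hx).le]
    norm_num
  -- derivative of h
  have hint : ∀ x > (0:ℝ), IntervalIntegrable (fun s => (F s) ^ (-(1:ℝ)/2)) volume 0 x := by
    intro x hx
    rw [intervalIntegrable_iff_integrableOn_Ioc_of_le hx.le]
    exact hfin x hx.le
  have hmeas : Measurable (fun s => (F s) ^ (-(1:ℝ)/2)) :=
    (hF_cont.measurable).pow_const _
  have hh_deriv : ∀ x > (0:ℝ), HasDerivAt h ((F x) ^ (-(1:ℝ)/2)) x := by
    intro x hx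
    rw [hheq]
    refine intervalIntegral.integral_hasDerivAt_right (hint x hx)
      (hmeas.stronglyMeasurable.stronglyMeasurableAtFilter) ?_
    exact (hF_cont.continuousAt).rpow_const (Or.inl (hF_pos x hx).ne')
  -- h tends to 0 at 0⁺
  have hh0 : h 0 = 0 := by rw [hh]; simp
  have hh_tendsto : Tendsto h (nhdsWithin 0 (Set.Ioi 0)) (nhds 0) := by
    have hcont : ContinuousOn h (Set.uIcc (0:ℝ) 1) := by
      rw [hheq]
      exact intervalIntegral.continuousOn_primitive_interval' (hint 1 one_pos)
        (by simp [Set.left_mem_uIcc])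
    have h0mem : (0:ℝ) ∈ Set.uIcc (0:ℝ) 1 := Set.left_mem_uIcc
    have := (hcont 0 h0mem).tendsto
    rw [hh0] at this
    refine this.mono_left ?_
    rw [Set.uIcc_of_le zero_le_one]
    refine le_inf nhdsWithin_le_nhds (Filter.le_principal_iff.mpr ?_)
    have : Set.Ioo (0:ℝ) 1 ∈ nhdsWithin 0 (Set.Ioi 0) := by
      apply Ioo_mem_nhdsGT_of_mem; exact ⟨le_refl _, one_pos⟩
    exact Filter.mem_of_superset this (fun x hx => ⟨hx.1.le, hx.2.le⟩)
  -- p t = t / √(F t) ≤ h t for t > 0, and p → 0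
  set p : ℝ → ℝ := fun t => t / Real.sqrt (F t) with hp
  have hp_le : ∀ t > (0:ℝ), p t ≤ h t := by
    intro t ht
    have hFt := hF_pos t ht
    have hsq : 0 < Real.sqrt (F t) := Real.sqrt_pos.mpr hFt
    have hle : ∫ s in Set.Ioc (0:ℝ) t, (F t) ^ (-(1:ℝ)/2) ≤
        ∫ s in Set.Ioc (0:ℝ) t, (F s) ^ (-(1:ℝ)/2) := by
      refine setIntegral_mono_on ((integrableOn_const_iff (C := F t ^ (-(1:ℝ)/2)) (by finiteness)).mpr (Or.inr ?_)) (hfin t ht.le)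
        measurableSet_Ioc ?_
      · rw [Real.volume_Ioc]; exact ENNReal.ofReal_lt_top
      · intro s hs
        exact Real.rpow_le_rpow_of_nonpos (hF_pos s hs.1)
          (hF_mono s t hs.1.le hs.2) (by norm_num)
    have hconst : ∫ s in Set.Ioc (0:ℝ) t, (F t) ^ (-(1:ℝ)/2) =
        t * (F t) ^ (-(1:ℝ)/2) := by
      rw [setIntegral_const, Real.volume_real_Ioc_of_le ht.le, smul_eq_mul]
      ring
    have hht : h t = ∫ s in Set.Ioc (0:ℝ) t, (F s) ^ (-(1:ℝ)/2) := by
      rw [hh, intervalIntegral.integral_of_le ht.le]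
    rw [hht, hp]
    calc t / Real.sqrt (F t) = t * (F t) ^ (-(1:ℝ)/2) := by
          rw [hrpow t ht, div_eq_mul_inv]
      _ ≤ _ := hconst ▸ hle
  have hp_tendsto : Tendsto p (nhdsWithin 0 (Set.Ioi 0)) (nhds 0) := by
    refine squeeze_zero'
      (Filter.eventually_of_mem self_mem_nhdsWithin (fun t ht => ?_))
      (Filter.eventually_of_mem self_mem_nhdsWithin (fun t ht => hp_le t ht)) hh_tendsto
    exact div_nonneg (le_of_lt ht) (Real.sqrt_nonneg _)
  -- derivative of p
  set p' : ℝ → ℝ := fun x =>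
    (1 * Real.sqrt (F x) - x * (f x / (2 * Real.sqrt (F x)))) / (Real.sqrt (F x)) ^ 2 with hp'
  have hp_deriv : ∀ x > (0:ℝ), HasDerivAt p (p' x) x := by
    intro x hx
    exact (hasDerivAt_id x).div ((hF_deriv x).sqrt (hF_pos x hx).ne')
      (Real.sqrt_pos.mpr (hF_pos x hx)).ne'
  -- ratio of derivatives
  have hratio : ∀ x > (0:ℝ), p' x / (F x) ^ (-(1:ℝ)/2) = 1 - (x * f x / F x) / 2 := by
    intro x hx
    have hFx := hF_pos x hx
    have hsq : 0 < Real.sqrt (F x) := Real.sqrt_pos.mpr hFx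
    have hsq2 : Real.sqrt (F x) ^ 2 = F x := Real.sq_sqrt hFx.le
    have key2 : ∀ s : ℝ, 0 < s →
        ((1 * s - x * (f x / (2 * s))) / s ^ 2) / s⁻¹ = 1 - x * f x / s ^ 2 / 2 := by
      intro s hs
      field_simp
    have h2 := key2 (Real.sqrt (F x)) hsq
    rw [hsq2] at h2
    rw [hrpow x hx, hp']
    simp only [hsq2]
    exact h2
  -- main application of L'Hôpital
  have key : Tendsto (fun x => p x / h x) (nhdsWithin 0 (Set.Ioi 0)) (nhds (1 - ω/2)) := by
    apply HasDerivAt.lhopital_zero_nhdsGT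
      (f' := p') (g' := fun x => (F x) ^ (-(1:ℝ)/2))
    · exact Filter.eventually_of_mem self_mem_nhdsWithin (fun x hx => hp_deriv x hx)
    · exact Filter.eventually_of_mem self_mem_nhdsWithin (fun x hx => hh_deriv x hx)
    · exact Filter.eventually_of_mem self_mem_nhdsWithin
        (fun x hx => (Real.rpow_pos_of_pos (hF_pos x hx) _).ne')
    · exact hp_tendsto
    · exact hh_tendsto
    · have h1 : Tendsto (fun x => 1 - (x * f x / F x) / 2)
          (nhdsWithin 0 (Set.Ioi 0)) (nhds (1 - ω/2)) :=
        tendsto_const_nhds.sub (hlim.div_const 2)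
      exact h1.congr' (Filter.eventually_of_mem self_mem_nhdsWithin
        (fun x hx => (hratio x hx).symm))
  refine key.congr' (Filter.eventually_of_mem self_mem_nhdsWithin (fun t ht => ?_))
  simp only [hp, div_div]
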